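/- Let α > 2 and K > 0 be real constants. Let f : [0,∞) → ℝ be a continuous function satisfying |f(ρ) − 1| ≤ K·e^{−αρ} and f(ρ) ≥ 1/4 for all ρ ≥ 0. Let y : [0,∞) → ℝ be differentiable with y′(ρ) + y(ρ)² = f(ρ) for all ρ ≥ 0, and y(0) > 0. Then there exists a constant C > 0, depending only on K, α and y(0), such that |y(ρ) − 1| ≤ C·e^{−2ρ} for all ρ ≥ 0. -/

import Mathlib

open Real Set Filter Topology

lemma pos_of_barrier (z g : ℝ → ℝ)
    (hz : ∀ t ≥ (0:ℝ), HasDerivAt z (g t) t)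
    (h0 : 0 < z 0)
    (hb : ∀ t ≥ (0:ℝ), z t = 0 → 0 < g t) :
    ∀ t ≥ (0:ℝ), 0 < z t := by
  intro T hT
  by_contra hc
  push_neg at hc
  set S : Set ℝ := Icc 0 T ∩ z ⁻¹' (Iic 0) with hS
  have hcont : ContinuousOn z (Icc 0 T) := fun t ht =>
    ((hz t ht.1).continuousAt).continuousWithinAt
  have hSclosed : IsClosed S :=
    hcont.preimage_isClosed_of_isClosed isClosed_Icc isClosed_Iic
  have hne : S.Nonempty := ⟨T, ⟨hT, le_refl T⟩, hc⟩
  have hbdd : BddBelow S := ⟨0, fun t ht => ht.1.1⟩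
  set c := sInf S with hc'
  have hcS : c ∈ S := hSclosed.csInf_mem hne hbdd
  have hc0 : 0 ≤ c := hcS.1.1
  have hcpos : 0 < c := by
    rcases hc0.lt_or_eq with h | h
    · exact h
    · exfalso; have h2 : z c ≤ 0 := hcS.2; rw [← h] at h2; linarith
  have hlt : ∀ t, 0 ≤ t → t < c → 0 < z t := by
    intro t ht0 htc
    by_contra hzt
    push_neg at hzt
    exact absurd (csInf_le hbdd ⟨⟨ht0, htc.le.trans hcS.1.2⟩, hzt⟩) (not_le.mpr htc)
  have hzc : z c = 0 := by
    have htend : Tendsto z (𝓝[<] c) (𝓝 (z c)) :=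
      ((hz c hc0).continuousAt.tendsto).mono_left nhdsWithin_le_nhds
    have hmem : Ioo 0 c ∈ 𝓝[<] c := Ioo_mem_nhdsLT_of_mem ⟨hcpos, le_refl c⟩
    have hge : 0 ≤ z c := by
      refine ge_of_tendsto htend ?_
      filter_upwards [hmem] with t ht
      exact (hlt t ht.1.le ht.2).le
    exact le_antisymm hcS.2 hge
  have hgc : 0 < g c := hb c hc0 hzc
  have hslope := hasDerivAt_iff_tendsto_slope.mp (hz c hc0)
  have hev : ∀ᶠ t in 𝓝[≠] c, 0 < slope z c t :=
    hslope.eventually (eventually_gt_nhds hgc)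
  have hev' : ∀ᶠ t in 𝓝[<] c, 0 < slope z c t :=
    hev.filter_mono (nhdsWithin_mono c fun t ht => ne_of_lt ht)
  have hmem : Ioo 0 c ∈ 𝓝[<] c := Ioo_mem_nhdsLT_of_mem ⟨hcpos, le_refl c⟩
  rcases (hev'.and (Filter.eventually_of_mem hmem (fun t ht => ht))).exists with ⟨t, hst, ht⟩
  have hslope' : slope z c t = (z t - z c) / (t - c) := by
    simp [slope_def_field]
  rw [hslope'] at hst
  have htc : t - c < 0 := sub_neg.mpr ht.2
  have : z t - z c < 0 := by
    by_contra hzz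
    push_neg at hzz
    nlinarith [div_nonpos_of_nonneg_of_nonpos hzz htc.le]
  have := hlt t ht.1.le ht.2
  nlinarith [hzc]

set_option maxHeartbeats 2000000 in
/-- **Lemma 2.3.** Let `α > 2` and `K > 0`. For any continuous `f : [0,∞) → ℝ` with
`|f ρ - 1| ≤ K·exp(-α ρ)` and `f ρ ≥ 1/4`, and any differentiable `y` with
`y' + y² = f` and `y 0 = y₀ > 0`, we have `|y ρ - 1| ≤ C·exp(-2ρ)` where `C > 0`
depends only on `K`, `α` and `y₀`. -/
theorem riccati_decay (α K y₀ : ℝ) (hα : 2 < α) (hK : 0 < K) (hy₀ : 0 < y₀) :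
    ∃ C > 0, ∀ f y : ℝ → ℝ,
      ContinuousOn f (Set.Ici 0) →
      (∀ ρ ≥ (0:ℝ), |f ρ - 1| ≤ K * Real.exp (-α * ρ)) →
      (∀ ρ ≥ (0:ℝ), 1/4 ≤ f ρ) →
      (∀ ρ ≥ (0:ℝ), HasDerivAt y (f ρ - (y ρ)^2) ρ) →
      y 0 = y₀ →
      ∀ ρ ≥ (0:ℝ), |y ρ - 1| ≤ C * Real.exp (-2 * ρ) := by
  have hα2 : (0:ℝ) < α - 2 := by linarith
  have habs : 0 ≤ |y₀ - 1| := abs_nonneg _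
  obtain ⟨m, hm0, hmhalf, hmy⟩ : ∃ m : ℝ, 0 < m ∧ m < 1/2 ∧ m < y₀ := by
    refine ⟨min y₀ (1/2) / 2, ?_, ?_, ?_⟩
    · have := lt_min hy₀ (by norm_num : (0:ℝ) < 1/2); linarith
    · have := min_le_right y₀ (1/2); linarith
    · have h1 := min_le_left y₀ (1/2)
      have := lt_min hy₀ (by norm_num : (0:ℝ) < 1/2); linarith
  obtain ⟨β, hβ1, hβ2, hβm, hβα⟩ : ∃ β : ℝ, 1 < β ∧ β ≤ 2 ∧ β < 1 + m ∧ β < α := by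
    refine ⟨min (1 + m/2) 2, lt_min (by linarith) (by norm_num), min_le_right _ _, ?_, ?_⟩
    · have := min_le_left (1 + m/2) 2; linarith
    · have := min_le_right (1 + m/2) 2; linarith
  have hd : 0 < 1 + m - β := by linarith
  have hb2 : 0 < 2*β - 2 := by linarith
  obtain ⟨C₁, hC₁, hC₁a, hKC₁⟩ :
      ∃ C₁ : ℝ, 0 < C₁ ∧ |y₀ - 1| < C₁ ∧ K < (1 + m - β) * C₁ := by
    refine ⟨K / (1 + m - β) + |y₀ - 1| + 1, by positivity, ?_, ?_⟩
    · have : 0 < K / (1 + m - β) := div_pos hK hd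
      linarith
    · have h1 : K / (1 + m - β) < K / (1 + m - β) + |y₀ - 1| + 1 := by linarith
      have h2 := (div_lt_iff₀ hd).mp h1
      linarith [h2]
  obtain ⟨C₂, hC₂eq⟩ : ∃ C₂ : ℝ, C₂ = |y₀ - 1| + 1 + K/(α-2) + C₁^2/(2*β-2) :=
    ⟨_, rfl⟩
  have hC₂ : 0 < C₂ := by rw [hC₂eq]; positivity
  refine ⟨C₂ + 1, by positivity, ?_⟩
  intro f y hfc hf1 hf4 hy hy0
  have hexp : ∀ (c t : ℝ), HasDerivAt (fun s => Real.exp (c * s)) (c * Real.exp (c * t)) t := by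
    intro c t
    have h1 : HasDerivAt (fun s : ℝ => c * s) (c * 1) t := (hasDerivAt_id t).const_mul c
    have := h1.exp
    convert this using 1
    ring
  -- Step 1 : lower bound y > m
  have step1 : ∀ t ≥ (0:ℝ), 0 < y t - m := by
    refine pos_of_barrier _ (fun t => f t - (y t)^2)
      (fun t ht => (hy t ht).sub_const m) (by rw [hy0]; linarith) ?_
    intro t ht hzt
    have hyt : y t = m := by linarith
    have := hf4 t ht
    show 0 < f t - (y t)^2
    rw [hyt]
    nlinarith
  -- Step 2 : upper exponential barrier  y - 1 < C₁ e^{-βt}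
  have step2 : ∀ t ≥ (0:ℝ), 0 < C₁ * Real.exp (-β * t) - (y t - 1) := by
    refine pos_of_barrier _
      (fun t => C₁ * (-β * Real.exp (-β * t)) - (f t - (y t)^2)) ?_ ?_ ?_
    · intro t ht
      exact ((hexp (-β) t).const_mul C₁).sub ((hy t ht).sub_const 1)
    · rw [hy0]
      simp only [mul_zero, Real.exp_zero, mul_one]
      nlinarith [le_abs_self (y₀ - 1)]
    · intro t ht hzt
      have hE : 0 < Real.exp (-β * t) := Real.exp_pos _
      have hEα : Real.exp (-α * t) ≤ Real.exp (-β * t) :=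
        Real.exp_le_exp.mpr (by nlinarith)
      have hf' := abs_le.mp (hf1 t ht)
      have hyl : 0 < y t - m := step1 t ht
      have hw : y t = 1 + C₁ * Real.exp (-β * t) := by linarith
      show 0 < C₁ * (-β * Real.exp (-β * t)) - (f t - (y t)^2)
      nlinarith [mul_lt_mul_of_pos_right hKC₁ hE,
        mul_le_mul_of_nonneg_left hEα hK.le,
        mul_pos (show (0:ℝ) < y t + 1 - (1 + m) by nlinarith) (mul_pos hC₁ hE),
        hf'.2]
  -- Step 3 : lower exponential barrier  y - 1 > -C₁ e^{-βt}
  have step3 : ∀ t ≥ (0:ℝ), 0 < (y t - 1) + C₁ * Real.exp (-β * t) := by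
    refine pos_of_barrier _
      (fun t => (f t - (y t)^2) + C₁ * (-β * Real.exp (-β * t))) ?_ ?_ ?_
    · intro t ht
      exact ((hy t ht).sub_const 1).add ((hexp (-β) t).const_mul C₁)
    · rw [hy0]
      simp only [mul_zero, Real.exp_zero, mul_one]
      nlinarith [neg_abs_le (y₀ - 1)]
    · intro t ht hzt
      have hE : 0 < Real.exp (-β * t) := Real.exp_pos _
      have hEα : Real.exp (-α * t) ≤ Real.exp (-β * t) :=
        Real.exp_le_exp.mpr (by nlinarith)
      have hf' := abs_le.mp (hf1 t ht)
      have hyl : 0 < y t - m := step1 t ht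
      have hw : y t = 1 - C₁ * Real.exp (-β * t) := by linarith
      show 0 < (f t - (y t)^2) + C₁ * (-β * Real.exp (-β * t))
      nlinarith [mul_lt_mul_of_pos_right hKC₁ hE,
        mul_le_mul_of_nonneg_left hEα hK.le,
        mul_pos (show (0:ℝ) < y t + 1 - (1 + m) by nlinarith) (mul_pos hC₁ hE),
        hf'.1]
  -- derivative of the stage-two barrier B
  have hBderiv : ∀ t : ℝ, HasDerivAt
      (fun s => C₂ + 1 - Real.exp (-1*s) - (K/(α-2)) * Real.exp (-(α-2)*s)
        - (C₁^2/(2*β-2)) * Real.exp (-(2*β-2)*s))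
      (Real.exp (-1*t) + K * Real.exp (-(α-2)*t) + C₁^2 * Real.exp (-(2*β-2)*t)) t := by
    intro t
    have h := (((hasDerivAt_const t (C₂+1)).sub (hexp (-1) t)).sub
      ((hexp (-(α-2)) t).const_mul (K/(α-2)))).sub
      ((hexp (-(2*β-2)) t).const_mul (C₁^2/(2*β-2)))
    refine h.congr_deriv ?_
    field_simp [(show (0:ℝ) < -1 + β by linarith).ne', (show (0:ℝ) < β - 1 by linarith).ne']
    ring
  have hvderiv : ∀ t ≥ (0:ℝ), HasDerivAt (fun s => Real.exp (2*s) * (y s - 1))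
      (2 * Real.exp (2*t) * (y t - 1) + Real.exp (2*t) * (f t - (y t)^2)) t := by
    intro t ht
    have h := (hexp 2 t).mul ((hy t ht).sub_const 1)
    exact h
  -- Step 4 : upper bound for v = e^{2t}(y-1)
  have step4 : ∀ t ≥ (0:ℝ), 0 <
      (C₂ + 1 - Real.exp (-1*t) - (K/(α-2)) * Real.exp (-(α-2)*t)
        - (C₁^2/(2*β-2)) * Real.exp (-(2*β-2)*t)) - Real.exp (2*t) * (y t - 1) := by
    refine pos_of_barrier _
      (fun t => (Real.exp (-1*t) + K * Real.exp (-(α-2)*t) + C₁^2 * Real.exp (-(2*β-2)*t))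
        - (2 * Real.exp (2*t) * (y t - 1) + Real.exp (2*t) * (f t - (y t)^2))) ?_ ?_ ?_
    · intro t ht
      exact (hBderiv t).sub (hvderiv t ht)
    · rw [hy0]
      simp only [mul_zero, Real.exp_zero, mul_one]
      rw [hC₂eq]
      nlinarith [le_abs_self (y₀ - 1)]
    · intro t ht _
      have hf' := abs_le.mp (hf1 t ht)
      have hEE : Real.exp (2*t) * Real.exp (-α*t) = Real.exp (-(α-2)*t) := by
        rw [← Real.exp_add]; ring_nf
      show 0 < (Real.exp (-1*t) + K * Real.exp (-(α-2)*t) + C₁^2 * Real.exp (-(2*β-2)*t))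
        - (2 * Real.exp (2*t) * (y t - 1) + Real.exp (2*t) * (f t - (y t)^2))
      nlinarith [Real.exp_pos (-1*t),
        mul_nonneg (sq_nonneg C₁) (Real.exp_pos (-(2*β-2)*t)).le,
        mul_nonneg (Real.exp_pos (2*t)).le (sq_nonneg (y t - 1)),
        mul_le_mul_of_nonneg_left hf'.2 (Real.exp_pos (2*t)).le,
        Real.exp_pos (2*t)]
  -- Step 5 : lower bound for v
  have step5 : ∀ t ≥ (0:ℝ), 0 <
      Real.exp (2*t) * (y t - 1) + (C₂ + 1 - Real.exp (-1*t) - (K/(α-2)) * Real.exp (-(α-2)*t)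
        - (C₁^2/(2*β-2)) * Real.exp (-(2*β-2)*t)) := by
    refine pos_of_barrier _
      (fun t => (2 * Real.exp (2*t) * (y t - 1) + Real.exp (2*t) * (f t - (y t)^2))
        + (Real.exp (-1*t) + K * Real.exp (-(α-2)*t) + C₁^2 * Real.exp (-(2*β-2)*t))) ?_ ?_ ?_
    · intro t ht
      exact (hvderiv t ht).add (hBderiv t)
    · rw [hy0]
      simp only [mul_zero, Real.exp_zero, mul_one]
      rw [hC₂eq]
      nlinarith [neg_abs_le (y₀ - 1)]
    · intro t ht _
      have hf' := abs_le.mp (hf1 t ht)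
      have hEE : Real.exp (2*t) * Real.exp (-α*t) = Real.exp (-(α-2)*t) := by
        rw [← Real.exp_add]; ring_nf
      have hEE2 : Real.exp (2*t) * (Real.exp (-β*t))^2 = Real.exp (-(2*β-2)*t) := by
        rw [sq, ← Real.exp_add, ← Real.exp_add]; ring_nf
      have h2 := step2 t ht
      have h3 := step3 t ht
      have hsq : (y t - 1)^2 ≤ (C₁ * Real.exp (-β*t))^2 :=
        sq_le_sq' (by linarith) (by linarith)
      show 0 < (2 * Real.exp (2*t) * (y t - 1) + Real.exp (2*t) * (f t - (y t)^2))
        + (Real.exp (-1*t) + K * Real.exp (-(α-2)*t) + C₁^2 * Real.exp (-(2*β-2)*t))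
      nlinarith [Real.exp_pos (-1*t),
        mul_le_mul_of_nonneg_left hsq (Real.exp_pos (2*t)).le,
        mul_le_mul_of_nonneg_left hf'.1 (Real.exp_pos (2*t)).le,
        Real.exp_pos (2*t)]
  -- Conclusion
  intro ρ hρ
  have h4 := step4 ρ hρ
  have h5 := step5 ρ hρ
  have hE1 : Real.exp (2*ρ) * Real.exp (-2*ρ) = 1 := by
    rw [← Real.exp_add]; norm_num
  have hEp : 0 < Real.exp (-2*ρ) := Real.exp_pos _
  have hB1 : 0 < K/(α-2) * Real.exp (-(α-2)*ρ) :=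
    mul_pos (div_pos hK hα2) (Real.exp_pos _)
  have hB2 : 0 ≤ C₁^2/(2*β-2) * Real.exp (-(2*β-2)*ρ) :=
    mul_nonneg (div_nonneg (sq_nonneg _) hb2.le) (Real.exp_pos _).le
  have hB3 : 0 < Real.exp (-1*ρ) := Real.exp_pos _
  rw [abs_le]
  constructor
  · nlinarith [mul_lt_mul_of_pos_right h5 hEp, Real.exp_pos (2*ρ)]
  · nlinarith [mul_lt_mul_of_pos_right h4 hEp, Real.exp_pos (2*ρ)]
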